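/- arXiv:math/0601599 — 2 statements merged into one kernel-verified Lean document; each statement's English description precedes it below -/
import Mathlib

section
/- Let (M, g) be a Riemannian manifold whose curvature operator is positive semidefinite (in particular, positive). Then for any smooth function f, the pointwise inequality R_{ijkl} R_{ik} f_j f_l ≥ 0 holds at every point of M, where f_j = ∇_j f, R_{ijkl} is the Riemann tensor and R_{ik} the Ricci tensor. -/
open MeasureTheory Real

noncomputable section

/-- Abstract component presentation of a Riemannian manifold relative to an orthonormal frame: the Riemann tensor `Rm = R_{ijkl}`, the Ricci tensor `Ric = R_{jk}` and covariant derivative operators `Dk` on tensors of rank `k`, together with the standard curvature symmetries, the Bianchi identities and the Ricci commutation formulas; repeated indices are summed -/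
structure RiemannianStructure (n : ℕ) where
  /-- the underlying manifold -/
  M : Type
  /-- the topology of `M` -/
  [topM : TopologicalSpace M]
  /-- the components `R_{ijkl}` of the Riemann curvature tensor in an orthonormal frame -/
  Rm : M → Fin n → Fin n → Fin n → Fin n → ℝ
  /-- the components `R_{jk}` of the Ricci tensor -/
  Ric : M → Fin n → Fin n → ℝ
  /-- the covariant derivative of a scalar: `(D0 u) x i = ∇_i u (x)` -/
  D0 : (M → ℝ) → M → Fin n → ℝ
  /-- the covariant derivative of a 1-tensor: `(D1 ω) x i j = ∇_i ω_j (x)` -/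
  D1 : (M → Fin n → ℝ) → M → Fin n → Fin n → ℝ
  /-- the covariant derivative of a 2-tensor: `(D2 T) x i j k = ∇_i T_{jk} (x)` -/
  D2 : (M → Fin n → Fin n → ℝ) → M → Fin n → Fin n → Fin n → ℝ
  /-- the covariant derivative of a 3-tensor -/
  D3 : (M → Fin n → Fin n → Fin n → ℝ) → M → Fin n → Fin n → Fin n → Fin n → ℝ
  /-- the covariant derivative of a 4-tensor -/
  D4 : (M → Fin n → Fin n → Fin n → Fin n → ℝ) →
    M → Fin n → Fin n → Fin n → Fin n → Fin n → ℝ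
  /-- antisymmetry of `R_{ijkl}` in the first index pair -/
  Rm_antisymm₁ : ∀ (x : M) (i j k l : Fin n), Rm x j i k l = - Rm x i j k l
  /-- antisymmetry of `R_{ijkl}` in the second index pair -/
  Rm_antisymm₂ : ∀ (x : M) (i j k l : Fin n), Rm x i j l k = - Rm x i j k l
  /-- symmetry of `R_{ijkl}` in the two index pairs -/
  Rm_pairSymm : ∀ (x : M) (i j k l : Fin n), Rm x k l i j = Rm x i j k l
  /-- first Bianchi identity -/
  Rm_bianchi₁ : ∀ (x : M) (i j k l : Fin n), Rm x i j k l + Rm x j k i l + Rm x k i j l = 0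
  /-- second Bianchi identity `∇_m R_{ijkl} + ∇_i R_{jmkl} + ∇_j R_{mikl} = 0` -/
  Rm_bianchi₂ : ∀ (x : M) (i j k l m : Fin n),
    D4 Rm x m i j k l + D4 Rm x i j m k l + D4 Rm x j m i k l = 0
  /-- the Ricci tensor is the trace of the Riemann tensor: `R_{jl} = R_{ijil}` -/
  Ric_eq : ∀ (x : M) (j l : Fin n), Ric x j l = ∑ i, Rm x i j i l
  /-- covariant differentiation commutes with the trace: `∇_i R_{jl} = ∇_i R_{mjml}` -/
  D2Ric_eq : ∀ (x : M) (i j l : Fin n), D2 Ric x i j l = ∑ m, D4 Rm x i m j m l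
  /-- Ricci identity (commutation of second covariant derivatives) on 1-tensors:
  `∇_i∇_j ω_k - ∇_j∇_i ω_k = -R_{ijmk} ω_m` -/
  comm₁ : ∀ (ω : M → Fin n → ℝ) (x : M) (i j k : Fin n),
    D2 (D1 ω) x i j k - D2 (D1 ω) x j i k = - ∑ m, Rm x i j m k * ω x m
  /-- Ricci identity on 2-tensors:
  `∇_i∇_j T_{lk} - ∇_j∇_i T_{lk} = -R_{ijml} T_{mk} - R_{ijmk} T_{lm}` -/
  comm₂ : ∀ (T : M → Fin n → Fin n → ℝ) (x : M) (i j l k : Fin n),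
    D3 (D2 T) x i j l k - D3 (D2 T) x j i l k
      = - (∑ m, Rm x i j m l * T x m k) - ∑ m, Rm x i j m k * T x l m

namespace RiemannianStructure

variable {n : ℕ} (S : RiemannianStructure n)

/-- The curvature operator (the quadratic form of `Rm` on 2-forms) is positive
semidefinite: `R_{ijkl} ω_{ij} ω_{kl} ≥ 0` for every 2-form `ω`. -/
def NonnegCurvatureOperator : Prop :=
  ∀ (x : S.M) (ω : Fin n → Fin n → ℝ), (∀ i j, ω j i = - ω i j) →
    0 ≤ ∑ i, ∑ j, ∑ k, ∑ l, S.Rm x i j k l * ω i j * ω k l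

/-- Nonnegative sectional curvature: `R(u,v,u,v) ≥ 0` for all vectors `u`, `v`. -/
def NonnegSectionalCurvature : Prop :=
  ∀ (x : S.M) (u v : Fin n → ℝ),
    0 ≤ ∑ i, ∑ j, ∑ k, ∑ l, S.Rm x i j k l * u i * v j * u k * v l

end RiemannianStructure

/-- Step 1: nonneg curvature operator implies nonneg sectional curvature. -/
theorem aux_sect {n : ℕ} (S : Type) (Rm : S → Fin n → Fin n → Fin n → Fin n → ℝ)
    (anti1 : ∀ (x : S) (i j k l : Fin n), Rm x j i k l = - Rm x i j k l)
    (anti2 : ∀ (x : S) (i j k l : Fin n), Rm x i j l k = - Rm x i j k l)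
    (hpos : ∀ (x : S) (ω : Fin n → Fin n → ℝ), (∀ i j, ω j i = - ω i j) →
      0 ≤ ∑ i, ∑ j, ∑ k, ∑ l, Rm x i j k l * ω i j * ω k l)
    (x : S) (u v : Fin n → ℝ) :
    0 ≤ ∑ i, ∑ j, ∑ k, ∑ l, Rm x i j k l * u i * v j * u k * v l := by
  set ω : Fin n → Fin n → ℝ := fun i j => u i * v j - u j * v i with hωdef
  have hω : ∀ i j, ω j i = - ω i j := by intro i j; simp only [ω]; ring
  have hQ := hpos x ω hω
  set A := ∑ i, ∑ j, ∑ k, ∑ l, Rm x i j k l * u i * v j * u k * v l with hA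
  -- inner swap lemma
  have hB : (∑ i, ∑ j, ∑ k, ∑ l, Rm x i j k l * u i * v j * u l * v k) = -A := by
    have h1 : (∑ i, ∑ j, ∑ k, ∑ l, Rm x i j k l * u i * v j * u l * v k)
        = ∑ i, ∑ j, ∑ k, ∑ l, Rm x i j l k * u i * v j * u k * v l := by
      refine Finset.sum_congr rfl fun i _ => Finset.sum_congr rfl fun j _ => ?_
      exact Finset.sum_comm
    rw [h1, hA]
    have h2 : (∑ i, ∑ j, ∑ k, ∑ l, Rm x i j l k * u i * v j * u k * v l)
        = ∑ i, ∑ j, ∑ k, ∑ l, -(Rm x i j k l * u i * v j * u k * v l) := by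
      refine Finset.sum_congr rfl fun i _ => Finset.sum_congr rfl fun j _ =>
        Finset.sum_congr rfl fun k _ => Finset.sum_congr rfl fun l _ => ?_
      rw [anti2 x i j k l]; ring
    rw [h2]; simp only [Finset.sum_neg_distrib]
  have hC : (∑ i, ∑ j, ∑ k, ∑ l, Rm x i j k l * u j * v i * u k * v l) = -A := by
    have h1 : (∑ i, ∑ j, ∑ k, ∑ l, Rm x i j k l * u j * v i * u k * v l)
        = ∑ i, ∑ j, ∑ k, ∑ l, Rm x j i k l * u i * v j * u k * v l := Finset.sum_comm
    rw [h1, hA]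
    have h2 : (∑ i, ∑ j, ∑ k, ∑ l, Rm x j i k l * u i * v j * u k * v l)
        = ∑ i, ∑ j, ∑ k, ∑ l, -(Rm x i j k l * u i * v j * u k * v l) := by
      refine Finset.sum_congr rfl fun i _ => Finset.sum_congr rfl fun j _ =>
        Finset.sum_congr rfl fun k _ => Finset.sum_congr rfl fun l _ => ?_
      rw [anti1 x i j k l]; ring
    rw [h2]; simp only [Finset.sum_neg_distrib]
  have hD : (∑ i, ∑ j, ∑ k, ∑ l, Rm x i j k l * u j * v i * u l * v k) = A := by
    have h1 : (∑ i, ∑ j, ∑ k, ∑ l, Rm x i j k l * u j * v i * u l * v k)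
        = ∑ i, ∑ j, ∑ k, ∑ l, Rm x i j l k * u j * v i * u k * v l := by
      refine Finset.sum_congr rfl fun i _ => Finset.sum_congr rfl fun j _ => ?_
      exact Finset.sum_comm
    have h2 : (∑ i, ∑ j, ∑ k, ∑ l, Rm x i j l k * u j * v i * u k * v l)
        = ∑ i, ∑ j, ∑ k, ∑ l, Rm x j i l k * u i * v j * u k * v l := Finset.sum_comm
    rw [h1, h2, hA]
    refine Finset.sum_congr rfl fun i _ => Finset.sum_congr rfl fun j _ =>
      Finset.sum_congr rfl fun k _ => Finset.sum_congr rfl fun l _ => ?_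
    rw [anti1 x i j l k, anti2 x i j k l]; ring
  have key : (∑ i, ∑ j, ∑ k, ∑ l, Rm x i j k l * ω i j * ω k l) = 4 * A := by
    have hexp : ∀ i j k l : Fin n, Rm x i j k l * ω i j * ω k l =
        Rm x i j k l * u i * v j * u k * v l - Rm x i j k l * u i * v j * u l * v k
        - (Rm x i j k l * u j * v i * u k * v l - Rm x i j k l * u j * v i * u l * v k) := by
      intro i j k l; simp only [ω]; ring
    calc (∑ i, ∑ j, ∑ k, ∑ l, Rm x i j k l * ω i j * ω k l)
        = ∑ i, ∑ j, ∑ k, ∑ l,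
            (Rm x i j k l * u i * v j * u k * v l - Rm x i j k l * u i * v j * u l * v k
            - (Rm x i j k l * u j * v i * u k * v l - Rm x i j k l * u j * v i * u l * v k)) := by
          simp only [hexp]
      _ = (∑ i, ∑ j, ∑ k, ∑ l, Rm x i j k l * u i * v j * u k * v l)
          - (∑ i, ∑ j, ∑ k, ∑ l, Rm x i j k l * u i * v j * u l * v k)
          - ((∑ i, ∑ j, ∑ k, ∑ l, Rm x i j k l * u j * v i * u k * v l)
          - (∑ i, ∑ j, ∑ k, ∑ l, Rm x i j k l * u j * v i * u l * v k)) := by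
          simp only [Finset.sum_sub_distrib]
      _ = A - (-A) - ((-A) - A) := by rw [hB, hC, hD]
      _ = 4 * A := by ring
  rw [key] at hQ
  linarith


/-- Collapse a quadruple sectional sum against an indicator vector. -/
theorem aux_collapse {n : ℕ} (S : Type) (Rm : S → Fin n → Fin n → Fin n → Fin n → ℝ)
    (x : S) (u : Fin n → ℝ) (i : Fin n) :
    (∑ a, ∑ b, ∑ c, ∑ d, Rm x a b c d * (fun a => if a = i then (1:ℝ) else 0) a * u b
      * (fun a => if a = i then (1:ℝ) else 0) c * u d)
    = ∑ b, ∑ d, Rm x i b i d * u b * u d := by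
  rw [Finset.sum_eq_single i]
  · refine Finset.sum_congr rfl fun b _ => ?_
    rw [Finset.sum_eq_single i]
    · simp
    · intro c _ hc; simp [hc]
    · simp
  · intro a _ ha; simp [ha]
  · simp

theorem aux_main {n : ℕ} (S : RiemannianStructure n)
    (hpos : S.NonnegCurvatureOperator) (f : S.M → ℝ) (x : S.M) :
    0 ≤ ∑ i, ∑ j, ∑ k, ∑ l,
        S.Rm x i j k l * S.Ric x i k * S.D0 f x j * S.D0 f x l := by
  have sect : ∀ (u v : Fin n → ℝ),
      0 ≤ ∑ i, ∑ j, ∑ k, ∑ l, S.Rm x i j k l * u i * v j * u k * v l :=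
    fun u v => aux_sect S.M S.Rm (S.Rm_antisymm₁) (S.Rm_antisymm₂) hpos x u v
  -- Ricci is symmetric
  have ricsymm : ∀ i j : Fin n, S.Ric x j i = S.Ric x i j := by
    intro i j
    rw [S.Ric_eq, S.Ric_eq]
    exact Finset.sum_congr rfl fun m _ => S.Rm_pairSymm x m i m j
  -- Ricci quadratic form is nonnegative
  have ricquad : ∀ u : Fin n → ℝ, 0 ≤ ∑ j, ∑ l, S.Ric x j l * u j * u l := by
    intro u
    have h1 : (∑ j, ∑ l, S.Ric x j l * u j * u l)
        = ∑ j, ∑ l, ∑ i, S.Rm x i j i l * u j * u l := by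
      refine Finset.sum_congr rfl fun j _ => Finset.sum_congr rfl fun l _ => ?_
      rw [S.Ric_eq, Finset.sum_mul, Finset.sum_mul]
    have h2 : (∑ j, ∑ l, ∑ i, S.Rm x i j i l * u j * u l)
        = ∑ i, ∑ j, ∑ l, S.Rm x i j i l * u j * u l := by
      calc (∑ j, ∑ l, ∑ i, S.Rm x i j i l * u j * u l)
          = ∑ j, ∑ i, ∑ l, S.Rm x i j i l * u j * u l :=
            Finset.sum_congr rfl fun j _ => Finset.sum_comm
        _ = ∑ i, ∑ j, ∑ l, S.Rm x i j i l * u j * u l := Finset.sum_comm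
    rw [h1, h2]
    refine Finset.sum_nonneg fun i _ => ?_
    have := sect (fun a => if a = i then (1:ℝ) else 0) u
    rwa [aux_collapse S.M S.Rm x u i] at this
  -- Ricci as a positive semidefinite matrix
  set A : Matrix (Fin n) (Fin n) ℝ := Matrix.of (S.Ric x) with hAdef
  have hHerm : A.IsHermitian := by
    ext i j
    simp only [Matrix.conjTranspose_apply, Matrix.of_apply, star_trivial, hAdef]
    exact ricsymm i j
  have hPSD : A.PosSemidef := by
    refine Matrix.PosSemidef.of_dotProduct_mulVec_nonneg hHerm fun v => ?_
    have : dotProduct (star v) (A.mulVec v) = ∑ j, ∑ l, S.Ric x j l * v j * v l := by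
      simp only [star_trivial, dotProduct, Matrix.mulVec, Matrix.of_apply,
        Finset.mul_sum, hAdef]
      exact Finset.sum_congr rfl fun j _ => Finset.sum_congr rfl fun l _ => by ring
    rw [this]
    exact ricquad v
  open scoped MatrixOrder in set C := CFC.sqrt A with hCdef
  open scoped MatrixOrder in have hC2 : C * C = A := CFC.sqrt_mul_sqrt_self A hPSD.nonneg
  open scoped MatrixOrder in have hCsymm : C.IsHermitian := (Matrix.nonneg_iff_posSemidef.mp (CFC.sqrt_nonneg A)).1
  have hRic : ∀ i k : Fin n, S.Ric x i k = ∑ m, C i m * C k m := by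
    intro i k
    have h1 : A i k = ∑ m, C i m * C m k := by rw [← hC2, Matrix.mul_apply]
    have h2 : ∀ m, C m k = C k m := fun m => by
      have := hCsymm.apply k m
      simpa using this
    rw [hAdef] at h1
    simp only [Matrix.of_apply] at h1
    rw [h1]
    exact Finset.sum_congr rfl fun m _ => by rw [h2 m]
  -- expand and reorder
  have expand : (∑ i, ∑ j, ∑ k, ∑ l,
        S.Rm x i j k l * S.Ric x i k * S.D0 f x j * S.D0 f x l)
      = ∑ i, ∑ j, ∑ k, ∑ l, ∑ m,
        S.Rm x i j k l * C i m * S.D0 f x j * C k m * S.D0 f x l := by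
    refine Finset.sum_congr rfl fun i _ => Finset.sum_congr rfl fun j _ =>
      Finset.sum_congr rfl fun k _ => Finset.sum_congr rfl fun l _ => ?_
    rw [hRic i k, Finset.mul_sum, Finset.sum_mul, Finset.sum_mul]
    exact Finset.sum_congr rfl fun m _ => by ring
  have reorder : (∑ i, ∑ j, ∑ k, ∑ l, ∑ m,
        S.Rm x i j k l * C i m * S.D0 f x j * C k m * S.D0 f x l)
      = ∑ m, ∑ i, ∑ j, ∑ k, ∑ l,
        S.Rm x i j k l * C i m * S.D0 f x j * C k m * S.D0 f x l := by
    set F : Fin n → Fin n → Fin n → Fin n → Fin n → ℝ := fun i j k l m =>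
      S.Rm x i j k l * C i m * S.D0 f x j * C k m * S.D0 f x l with hF
    calc (∑ i, ∑ j, ∑ k, ∑ l, ∑ m, F i j k l m)
        = ∑ i, ∑ j, ∑ k, ∑ m, ∑ l, F i j k l m :=
          Finset.sum_congr rfl fun i _ => Finset.sum_congr rfl fun j _ =>
            Finset.sum_congr rfl fun k _ => Finset.sum_comm
      _ = ∑ i, ∑ j, ∑ m, ∑ k, ∑ l, F i j k l m :=
          Finset.sum_congr rfl fun i _ => Finset.sum_congr rfl fun j _ =>
            Finset.sum_comm
      _ = ∑ i, ∑ m, ∑ j, ∑ k, ∑ l, F i j k l m :=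
          Finset.sum_congr rfl fun i _ => Finset.sum_comm
      _ = ∑ m, ∑ i, ∑ j, ∑ k, ∑ l, F i j k l m := Finset.sum_comm
  rw [expand, reorder]
  exact Finset.sum_nonneg fun m _ => sect (fun i => C i m) (S.D0 f x)

/-- On a Riemannian manifold with positive semidefinite
curvature operator, `R_{ijkl} R_{ik} f_j f_l ≥ 0` pointwise, for any function `f`. -/
theorem RmRicff_nonneg {n : ℕ} (S : RiemannianStructure n)
    (hpos : S.NonnegCurvatureOperator) (f : S.M → ℝ) (x : S.M) :
    0 ≤ ∑ i, ∑ j, ∑ k, ∑ l,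
        S.Rm x i j k l * S.Ric x i k * S.D0 f x j * S.D0 f x l := by
  exact aux_main S hpos f x
end
end

section
/- (Berger) Let T be a symmetric 2-tensor on a Riemannian manifold (M, g) with nonnegative sectional curvature. Then at every point K := (∇_i∇_j T_{ik} − ∇_j∇_i T_{ik}) T_{jk} ≥ 0; more precisely, in an orthonormal frame diagonalizing T with eigenvalues λ_1, …, λ_n, one has K = Σ_{i<j} R_{ijij} (λ_i − λ_j)². -/
open MeasureTheory Real

noncomputable section

/-- Component form of the spectral theorem for real symmetric "matrices". -/
lemma exists_spectral {n : ℕ} (A : Fin n → Fin n → ℝ) (hA : ∀ i j, A i j = A j i) :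
    ∃ (U : Fin n → Fin n → ℝ) (lam : Fin n → ℝ),
      (∀ i j, A i j = ∑ α, lam α * U i α * U j α) ∧
      (∀ i j, (∑ α, U i α * U j α) = if i = j then 1 else 0) ∧
      (∀ α β, (∑ i, U i α * U i β) = if α = β then 1 else 0) := by
  have hH : (Matrix.of A).IsHermitian := by
    ext i j
    simp [Matrix.conjTranspose, Matrix.transpose_apply, hA i j]
  set U : Matrix (Fin n) (Fin n) ℝ := (hH.eigenvectorUnitary : Matrix (Fin n) (Fin n) ℝ) with hU
  refine ⟨fun i α => U i α, hH.eigenvalues, ?_, ?_, ?_⟩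
  · intro i j
    have h := hH.spectral_theorem
    have h2 := congrArg (fun (B : Matrix (Fin n) (Fin n) ℝ) => B i j) h
    simp only [Unitary.conjStarAlgAut_apply, Matrix.mul_apply, Matrix.diagonal_apply, Matrix.conjTranspose_apply,
      Function.comp, RCLike.ofReal_real_eq_id, id_eq, star_trivial] at h2
    simp only [Matrix.of_apply] at h2
    rw [h2]
    refine Finset.sum_congr rfl fun α _ => ?_
    rw [Finset.sum_eq_single α (by intro b _ hb; simp [hb]) (by simp)]
    simp only [if_true, Matrix.star_apply, star_trivial]
    ring
  · intro i j
    have h : (U * star U) i j = (1 : Matrix (Fin n) (Fin n) ℝ) i j := by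
      rw [(Matrix.mem_unitaryGroup_iff).mp hH.eigenvectorUnitary.2]
    simpa [Matrix.mul_apply, Matrix.one_apply, Matrix.conjTranspose_apply] using h
  · intro α β
    have h : (star U * U) α β = (1 : Matrix (Fin n) (Fin n) ℝ) α β := by
      rw [(Matrix.mem_unitaryGroup_iff').mp hH.eigenvectorUnitary.2]
    simpa [Matrix.mul_apply, Matrix.one_apply, Matrix.conjTranspose_apply, mul_comm] using h

section helpers
variable {n : ℕ}

private lemma pull2 (f : Fin n → Fin n → ℝ) :
    ∑ x, ∑ a, f x a = ∑ a, ∑ x, f x a := Finset.sum_comm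

private lemma pull3 (f : Fin n → Fin n → Fin n → ℝ) :
    ∑ x, ∑ y, ∑ a, f x y a = ∑ a, ∑ x, ∑ y, f x y a := by
  calc ∑ x, ∑ y, ∑ a, f x y a = ∑ x, ∑ a, ∑ y, f x y a :=
        Finset.sum_congr rfl fun x _ => pull2 (f x)
    _ = ∑ a, ∑ x, ∑ y, f x y a := pull2 _

private lemma pull4 (f : Fin n → Fin n → Fin n → Fin n → ℝ) :
    ∑ x, ∑ y, ∑ z, ∑ a, f x y z a = ∑ a, ∑ x, ∑ y, ∑ z, f x y z a := by
  calc ∑ x, ∑ y, ∑ z, ∑ a, f x y z a = ∑ x, ∑ a, ∑ y, ∑ z, f x y z a :=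
        Finset.sum_congr rfl fun x _ => pull3 (f x)
    _ = _ := pull2 _

private lemma pull5 (f : Fin n → Fin n → Fin n → Fin n → Fin n → ℝ) :
    ∑ x, ∑ y, ∑ z, ∑ w, ∑ a, f x y z w a = ∑ a, ∑ x, ∑ y, ∑ z, ∑ w, f x y z w a := by
  calc ∑ x, ∑ y, ∑ z, ∑ w, ∑ a, f x y z w a = ∑ x, ∑ a, ∑ y, ∑ z, ∑ w, f x y z w a :=
        Finset.sum_congr rfl fun x _ => pull4 (f x)
    _ = _ := pull2 _

private lemma pull6 (f : Fin n → Fin n → Fin n → Fin n → Fin n → Fin n → ℝ) :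
    ∑ x, ∑ y, ∑ z, ∑ w, ∑ v, ∑ a, f x y z w v a
      = ∑ a, ∑ x, ∑ y, ∑ z, ∑ w, ∑ v, f x y z w v a := by
  calc ∑ x, ∑ y, ∑ z, ∑ w, ∑ v, ∑ a, f x y z w v a
      = ∑ x, ∑ a, ∑ y, ∑ z, ∑ w, ∑ v, f x y z w v a :=
        Finset.sum_congr rfl fun x _ => pull5 (f x)
    _ = _ := pull2 _

/-- pull the two innermost sums of a 6-fold sum to the outside -/
private lemma pull66 (f : Fin n → Fin n → Fin n → Fin n → Fin n → Fin n → ℝ) :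
    ∑ x, ∑ y, ∑ z, ∑ w, ∑ a, ∑ b, f x y z w a b
      = ∑ a, ∑ b, ∑ x, ∑ y, ∑ z, ∑ w, f x y z w a b := by
  calc ∑ x, ∑ y, ∑ z, ∑ w, ∑ a, ∑ b, f x y z w a b
      = ∑ b, ∑ x, ∑ y, ∑ z, ∑ w, ∑ a, f x y z w a b := pull6 f
    _ = ∑ b, ∑ a, ∑ x, ∑ y, ∑ z, ∑ w, f x y z w a b :=
        Finset.sum_congr rfl fun b _ => pull5 _
    _ = _ := pull2 _

end helpers

private lemma core_nonneg {n : ℕ} (R : Fin n → Fin n → Fin n → Fin n → ℝ)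
    (ha1 : ∀ i j k l, R j i k l = - R i j k l)
    (ha2 : ∀ i j k l, R i j l k = - R i j k l)
    (hpos : ∀ u v : Fin n → ℝ,
      0 ≤ ∑ i, ∑ j, ∑ k, ∑ l, R i j k l * u i * v j * u k * v l)
    (A : Fin n → Fin n → ℝ) (hs : ∀ i j, A i j = A j i) :
    0 ≤ ∑ i, ∑ j, ∑ k,
        ((-(∑ m, R i j m i * A m k)) - ∑ m, R i j m k * A i m) * A j k := by
  obtain ⟨U, lam, hdec, hrow, hcol⟩ := exists_spectral A hs
  set Q : Fin n → Fin n → ℝ :=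
    fun α β => ∑ i, ∑ j, ∑ k, ∑ l, R i j k l * U i α * U j β * U k α * U l β with hQdef
  have hQpos : ∀ α β, 0 ≤ Q α β := fun α β => hpos (fun i => U i α) (fun j => U j β)
  -- the squared matrix in terms of the eigendata
  set C : Fin n → Fin n → ℝ := fun i k => ∑ α, lam α ^ 2 * U i α * U k α with hCdef
  have hCsymm : ∀ i k, C i k = C k i := by
    intro i k
    exact Finset.sum_congr rfl fun α _ => by ring
  have hB : ∀ i k, (∑ m, A i m * A k m) = C i k := by
    intro i k
    calc ∑ m, A i m * A k m
        = ∑ m, (∑ α, lam α * U i α * U m α) * (∑ β, lam β * U k β * U m β) :=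
          Finset.sum_congr rfl fun m _ => by rw [hdec i m, hdec k m]
      _ = ∑ m, ∑ α, ∑ β, (lam α * U i α * U m α) * (lam β * U k β * U m β) :=
          Finset.sum_congr rfl fun m _ => Finset.sum_mul_sum _ _ _ _
      _ = ∑ α, ∑ β, ∑ m, (lam α * U i α * U m α) * (lam β * U k β * U m β) :=
          (pull3 (fun α β m => (lam α * U i α * U m α) * (lam β * U k β * U m β))).symm
      _ = ∑ α, ∑ β, (lam α * U i α * (lam β * U k β)) * ∑ m, U m α * U m β := by
          refine Finset.sum_congr rfl fun α _ => Finset.sum_congr rfl fun β _ => ?_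
          rw [Finset.mul_sum]
          exact Finset.sum_congr rfl fun m _ => by ring
      _ = ∑ α, ∑ β, (lam α * U i α * (lam β * U k β)) * (if α = β then 1 else 0) := by
          refine Finset.sum_congr rfl fun α _ => Finset.sum_congr rfl fun β _ => ?_
          rw [hcol]
      _ = C i k := by
          refine Finset.sum_congr rfl fun α _ => ?_
          rw [Finset.sum_eq_single α (fun b _ hb => by simp [Ne.symm hb]) (by simp)]
          simp only [if_true]
          ring
  -- Claim A : the second piece equals ∑ λα λβ Q α β
  have claimA : (∑ i, ∑ j, ∑ k, (∑ m, R i j m k * A i m) * A j k)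
      = ∑ α, ∑ β, lam α * lam β * Q α β := by
    calc ∑ i, ∑ j, ∑ k, (∑ m, R i j m k * A i m) * A j k
        = ∑ i, ∑ j, ∑ k, ∑ m, (R i j m k * A i m) * A j k := by
          refine Finset.sum_congr rfl fun i _ => Finset.sum_congr rfl fun j _ =>
            Finset.sum_congr rfl fun k _ => ?_
          rw [Finset.sum_mul]
      _ = ∑ i, ∑ j, ∑ k, ∑ m, ∑ α, ∑ β,
            R i j m k * (lam α * U i α * U m α) * (lam β * U j β * U k β) := by
          refine Finset.sum_congr rfl fun i _ => Finset.sum_congr rfl fun j _ =>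
            Finset.sum_congr rfl fun k _ => Finset.sum_congr rfl fun m _ => ?_
          rw [hdec i m, hdec j k]
          simp only [Finset.mul_sum, Finset.sum_mul]
          rw [pull2]
      _ = ∑ α, ∑ β, ∑ i, ∑ j, ∑ k, ∑ m,
            R i j m k * (lam α * U i α * U m α) * (lam β * U j β * U k β) :=
          pull66 _
      _ = ∑ α, ∑ β, lam α * lam β * Q α β := by
          refine Finset.sum_congr rfl fun α _ => Finset.sum_congr rfl fun β _ => ?_
          rw [hQdef]
          simp only [Finset.mul_sum]
          refine Finset.sum_congr rfl fun i _ => Finset.sum_congr rfl fun j _ => ?_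
          rw [pull2 (fun k m => R i j m k * (lam α * U i α * U m α) * (lam β * U j β * U k β))]
          refine Finset.sum_congr rfl fun k _ => Finset.sum_congr rfl fun l _ => ?_
          ring
  -- Claim C : the first piece equals ∑ λα² Q α β
  have claimC : (∑ i, ∑ j, ∑ k, (-(∑ m, R i j m i * A m k)) * A j k)
      = ∑ α, ∑ β, lam α ^ 2 * Q α β := by
    have lhs_eq : (∑ i, ∑ j, ∑ k, (-(∑ m, R i j m i * A m k)) * A j k)
        = ∑ i, ∑ j, ∑ k, R i j i k * C k j := by
      calc ∑ i, ∑ j, ∑ k, (-(∑ m, R i j m i * A m k)) * A j k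
          = ∑ i, ∑ j, ∑ k, ∑ m, R i j i m * (A m k * A j k) := by
            refine Finset.sum_congr rfl fun i _ => Finset.sum_congr rfl fun j _ =>
              Finset.sum_congr rfl fun k _ => ?_
            rw [neg_mul, Finset.sum_mul, ← Finset.sum_neg_distrib]
            refine Finset.sum_congr rfl fun m _ => ?_
            rw [ha2 i j m i]
            ring
        _ = ∑ i, ∑ j, ∑ m, ∑ k, R i j i m * (A m k * A j k) := by
            refine Finset.sum_congr rfl fun i _ => Finset.sum_congr rfl fun j _ => ?_
            exact pull2 _
        _ = ∑ i, ∑ j, ∑ m, R i j i m * C m j := by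
            refine Finset.sum_congr rfl fun i _ => Finset.sum_congr rfl fun j _ =>
              Finset.sum_congr rfl fun m _ => ?_
            rw [← Finset.mul_sum, hB m j]
        _ = ∑ i, ∑ j, ∑ k, R i j i k * C k j := rfl
    have rhs_eq : (∑ α, ∑ β, lam α ^ 2 * Q α β) = ∑ i, ∑ j, ∑ k, R i j k j * C i k := by
      calc ∑ α, ∑ β, lam α ^ 2 * Q α β
          = ∑ α, ∑ β, ∑ i, ∑ j, ∑ k, ∑ l,
              lam α ^ 2 * (R i j k l * U i α * U j β * U k α * U l β) := by
            refine Finset.sum_congr rfl fun α _ => Finset.sum_congr rfl fun β _ => ?_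
            rw [hQdef]
            simp only [Finset.mul_sum]
        _ = ∑ i, ∑ j, ∑ k, ∑ l, ∑ α, ∑ β,
              lam α ^ 2 * (R i j k l * U i α * U j β * U k α * U l β) :=
            (pull66 _).symm
        _ = ∑ i, ∑ j, ∑ k, ∑ l, R i j k l * C i k * (∑ β, U j β * U l β) := by
            refine Finset.sum_congr rfl fun i _ => Finset.sum_congr rfl fun j _ =>
              Finset.sum_congr rfl fun k _ => Finset.sum_congr rfl fun l _ => ?_
            rw [hCdef]
            simp only [Finset.mul_sum, Finset.sum_mul]
            rw [pull2]
            refine Finset.sum_congr rfl fun a _ => Finset.sum_congr rfl fun b _ => by ring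
        _ = ∑ i, ∑ j, ∑ k, ∑ l, R i j k l * C i k * (if j = l then 1 else 0) := by
            refine Finset.sum_congr rfl fun i _ => Finset.sum_congr rfl fun j _ =>
              Finset.sum_congr rfl fun k _ => Finset.sum_congr rfl fun l _ => ?_
            rw [hrow]
        _ = ∑ i, ∑ j, ∑ k, R i j k j * C i k := by
            refine Finset.sum_congr rfl fun i _ => Finset.sum_congr rfl fun j _ =>
              Finset.sum_congr rfl fun k _ => ?_
            rw [Finset.sum_eq_single j (fun b _ hb => by simp [Ne.symm hb]) (by simp)]
            simp
    rw [lhs_eq, rhs_eq]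
    calc ∑ i, ∑ j, ∑ k, R i j i k * C k j
        = ∑ j, ∑ i, ∑ k, R i j i k * C k j := pull2 _
      _ = ∑ i, ∑ j, ∑ k, R i j k j * C i k := by
          refine Finset.sum_congr rfl fun a _ => Finset.sum_congr rfl fun b _ =>
            Finset.sum_congr rfl fun c _ => ?_
          have h1 : R b a b c = R a b c b := by rw [ha1 a b b c, ha2 a b c b]; ring
          rw [h1, hCsymm c a]
  have hQsymm : ∀ α β, Q β α = Q α β := by
    intro α β
    calc Q β α
        = ∑ a, ∑ b, ∑ k, ∑ l, R b a k l * U b β * U a α * U k β * U l α := pull2 _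
      _ = ∑ a, ∑ b, ∑ k, ∑ l, R b a l k * U b β * U a α * U l β * U k α := by
          refine Finset.sum_congr rfl fun a _ => Finset.sum_congr rfl fun b _ => ?_
          exact pull2 _
      _ = Q α β := by
          refine Finset.sum_congr rfl fun a _ => Finset.sum_congr rfl fun b _ =>
            Finset.sum_congr rfl fun k _ => Finset.sum_congr rfl fun l _ => ?_
          rw [ha1 a b l k, ha2 a b k l]
          ring
  have hsplit : (∑ i, ∑ j, ∑ k,
        ((-(∑ m, R i j m i * A m k)) - ∑ m, R i j m k * A i m) * A j k)
      = (∑ α, ∑ β, lam α ^ 2 * Q α β) - ∑ α, ∑ β, lam α * lam β * Q α β := by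
    rw [← claimA, ← claimC, ← Finset.sum_sub_distrib]
    refine Finset.sum_congr rfl fun i _ => ?_
    rw [← Finset.sum_sub_distrib]
    refine Finset.sum_congr rfl fun j _ => ?_
    rw [← Finset.sum_sub_distrib]
    refine Finset.sum_congr rfl fun k _ => ?_
    ring
  have hswap : (∑ α, ∑ β, lam α ^ 2 * Q α β) = ∑ α, ∑ β, lam β ^ 2 * Q α β := by
    calc ∑ α, ∑ β, lam α ^ 2 * Q α β = ∑ a, ∑ b, lam b ^ 2 * Q b a := pull2 _
      _ = ∑ a, ∑ b, lam b ^ 2 * Q a b := by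
          refine Finset.sum_congr rfl fun a _ => Finset.sum_congr rfl fun b _ => ?_
          rw [hQsymm a b]
  have key : 0 ≤ ∑ α, ∑ β, (lam α - lam β) ^ 2 * Q α β := by
    refine Finset.sum_nonneg fun α _ => Finset.sum_nonneg fun β _ => ?_
    exact mul_nonneg (sq_nonneg _) (hQpos α β)
  have hcomb : (∑ α, ∑ β, (lam α - lam β) ^ 2 * Q α β)
      = ((∑ α, ∑ β, lam α ^ 2 * Q α β) + ∑ α, ∑ β, lam β ^ 2 * Q α β)
        - (2 : ℝ) * ∑ α, ∑ β, lam α * lam β * Q α β := by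
    rw [← Finset.sum_add_distrib, Finset.mul_sum, ← Finset.sum_sub_distrib]
    refine Finset.sum_congr rfl fun α _ => ?_
    rw [← Finset.sum_add_distrib, Finset.mul_sum, ← Finset.sum_sub_distrib]
    refine Finset.sum_congr rfl fun β _ => ?_
    ring
  rw [hsplit]
  linarith [key, hcomb, hswap]

private lemma core_diag {n : ℕ} (R : Fin n → Fin n → Fin n → Fin n → ℝ)
    (ha1 : ∀ i j k l, R j i k l = - R i j k l)
    (ha2 : ∀ i j k l, R i j l k = - R i j k l)
    (lam : Fin n → ℝ) :
    (∑ i, ∑ j, ∑ k,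
      ((-(∑ m, R i j m i * (if m = k then lam m else 0)))
        - ∑ m, R i j m k * (if i = m then lam i else 0)) * (if j = k then lam j else 0))
      = ∑ i, ∑ j, if i < j then R i j i j * (lam i - lam j) ^ 2 else 0 := by
  have e1 : ∀ i j k : Fin n,
      (∑ m, R i j m i * (if m = k then lam m else 0)) = R i j k i * lam k := by
    intro i j k
    rw [Finset.sum_eq_single k (fun b _ hb => by simp [hb]) (by simp)]
    simp
  have e2 : ∀ i j k : Fin n,
      (∑ m, R i j m k * (if i = m then lam i else 0)) = R i j i k * lam i := by
    intro i j k
    rw [Finset.sum_eq_single i (fun b _ hb => by simp [Ne.symm hb]) (by simp)]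
    simp
  have step1 : (∑ i, ∑ j, ∑ k,
      ((-(∑ m, R i j m i * (if m = k then lam m else 0)))
        - ∑ m, R i j m k * (if i = m then lam i else 0)) * (if j = k then lam j else 0))
      = ∑ i, ∑ j, R i j i j * (lam j - lam i) * lam j := by
    refine Finset.sum_congr rfl fun i _ => Finset.sum_congr rfl fun j _ => ?_
    rw [Finset.sum_eq_single j (fun b _ hb => by simp [Ne.symm hb]) (by simp)]
    rw [e1 i j j, e2 i j j]
    have h1 : R i j j i = - R i j i j := ha2 i j i j
    rw [h1]
    simp only [if_true]
    ring
  rw [step1]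
  -- now symmetrize
  set g : Fin n → Fin n → ℝ := fun i j => R i j i j * (lam j - lam i) * lam j with hg
  set h : Fin n → Fin n → ℝ :=
    fun i j => if i < j then R i j i j * (lam i - lam j) ^ 2 else 0 with hh
  have hRs : ∀ i j : Fin n, R j i j i = R i j i j := by
    intro i j
    rw [ha1 i j j i, ha2 i j i j]
    ring
  have hgg : ∀ i j : Fin n, g i j + g j i = h i j + h j i := by
    intro i j
    rcases lt_trichotomy i j with hij | hij | hij
    · have hji : ¬ j < i := not_lt_of_gt hij
      simp only [hg, hh, if_pos hij, if_neg hji, add_zero]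
      rw [hRs i j]
      ring
    · subst hij
      simp only [hg, hh, lt_irrefl, if_neg (lt_irrefl i)]
      ring
    · have hij' : ¬ i < j := not_lt_of_gt hij
      simp only [hg, hh, if_pos hij, if_neg hij', zero_add]
      rw [hRs i j]
      ring
  have hswapg : (∑ i, ∑ j, g j i) = ∑ i, ∑ j, g i j := pull2 _
  have hswaph : (∑ i, ∑ j, h j i) = ∑ i, ∑ j, h i j := pull2 _
  have hsum : (∑ i, ∑ j, g i j) + (∑ i, ∑ j, g j i)
      = (∑ i, ∑ j, h i j) + (∑ i, ∑ j, h j i) := by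
    rw [← Finset.sum_add_distrib, ← Finset.sum_add_distrib]
    refine Finset.sum_congr rfl fun i _ => ?_
    rw [← Finset.sum_add_distrib, ← Finset.sum_add_distrib]
    exact Finset.sum_congr rfl fun j _ => hgg i j
  have : (∑ i, ∑ j, g i j) = ∑ i, ∑ j, h i j := by linarith
  exact this

/-- **Berger.** For a symmetric 2-tensor `T` on a Riemannian
manifold with nonnegative sectional curvature,
`K = (∇_i∇_j T_{ik} - ∇_j∇_i T_{ik}) T_{jk} ≥ 0` pointwise; more precisely, in an
orthonormal frame diagonalizing `T` with eigenvalues `λ_i`,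
`K = ∑_{i<j} R_{ijij} (λ_i - λ_j)²`. -/
theorem berger_inequality {n : ℕ} (S : RiemannianStructure n)
    (hsec : S.NonnegSectionalCurvature)
    (T : S.M → Fin n → Fin n → ℝ) (hT : ∀ (x : S.M) (i j : Fin n), T x i j = T x j i) :
    (∀ x : S.M,
      0 ≤ ∑ i, ∑ j, ∑ k,
          (S.D3 (S.D2 T) x i j i k - S.D3 (S.D2 T) x j i i k) * T x j k) ∧
    (∀ (x : S.M) (lam : Fin n → ℝ),
      (∀ i j, T x i j = if i = j then lam i else 0) →
      (∑ i, ∑ j, ∑ k, (S.D3 (S.D2 T) x i j i k - S.D3 (S.D2 T) x j i i k) * T x j k)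
        = ∑ i, ∑ j, if i < j then S.Rm x i j i j * (lam i - lam j) ^ 2 else 0) := by
  have ha1 := fun (x : S.M) => S.Rm_antisymm₁ x
  have ha2 := fun (x : S.M) => S.Rm_antisymm₂ x
  constructor
  · intro x
    have hpos : ∀ u v : Fin n → ℝ,
        0 ≤ ∑ i, ∑ j, ∑ k, ∑ l, S.Rm x i j k l * u i * v j * u k * v l := fun u v => hsec x u v
    have heq : (∑ i, ∑ j, ∑ k,
          (S.D3 (S.D2 T) x i j i k - S.D3 (S.D2 T) x j i i k) * T x j k)
        = ∑ i, ∑ j, ∑ k,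
          ((-(∑ m, S.Rm x i j m i * T x m k)) - ∑ m, S.Rm x i j m k * T x i m) * T x j k := by
      refine Finset.sum_congr rfl fun i _ => Finset.sum_congr rfl fun j _ =>
        Finset.sum_congr rfl fun k _ => ?_
      rw [S.comm₂ T x i j i k]
    rw [heq]
    exact core_nonneg (S.Rm x) (ha1 x) (ha2 x) hpos (T x) (hT x)
  · intro x lam hdiag
    have heq : (∑ i, ∑ j, ∑ k,
          (S.D3 (S.D2 T) x i j i k - S.D3 (S.D2 T) x j i i k) * T x j k)
        = ∑ i, ∑ j, ∑ k,
          ((-(∑ m, S.Rm x i j m i * (if m = k then lam m else 0)))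
            - ∑ m, S.Rm x i j m k * (if i = m then lam i else 0))
          * (if j = k then lam j else 0) := by
      refine Finset.sum_congr rfl fun i _ => Finset.sum_congr rfl fun j _ =>
        Finset.sum_congr rfl fun k _ => ?_
      rw [S.comm₂ T x i j i k]
      simp only [hdiag]
    rw [heq]
    exact core_diag (S.Rm x) (ha1 x) (ha2 x) lam
end
end
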